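/- arXiv:2512.01227 — 2 statements merged into one kernel-verified Lean document; each statement's English description precedes it below -/
import Mathlib

section
/- Over a field of characteristic ≠ 2, if M is a fully symmetric n^d × n^d matrix (M^{⊤_k} = M for all k ∈ [d]), then PT-rank(M) ≤ 2^{d−1} · SoS(Q_M). -/
open Matrix BigOperators

/-- The `κ`-partial transpose of an `n^d × n^d` matrix (indexed by tuples in `[n]^d`). -/
def ptrans {F : Type*} [Field F] {n d : ℕ} (κ : Finset (Fin d))
    (M : Matrix (Fin d → Fin n) (Fin d → Fin n) F) :
    Matrix (Fin d → Fin n) (Fin d → Fin n) F :=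
  fun i j => M (fun k => if k ∈ κ then j k else i k) (fun k => if k ∈ κ then i k else j k)

/-- A matrix is PT-basic if some partial transpose of it has rank 1. -/
def IsPTBasic {F : Type*} [Field F] {n d : ℕ}
    (M : Matrix (Fin d → Fin n) (Fin d → Fin n) F) : Prop :=
  ∃ κ : Finset (Fin d), (ptrans κ M).rank = 1

/-- The PT-rank of `M`: the minimum number of PT-basic matrices summing to `M`. -/
noncomputable def PTrank {F : Type*} [Field F] {n d : ℕ}
    (M : Matrix (Fin d → Fin n) (Fin d → Fin n) F) : ℕ :=
  sInf { r | ∃ P : Fin r → Matrix (Fin d → Fin n) (Fin d → Fin n) F,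
    (∀ i, IsPTBasic (P i)) ∧ M = ∑ i, P i }

/-- The `d`-multilinear polynomial with coefficient function `c` (degree 1 in each of the
`d` blocks of `n` variables `X^{(k)}_a`, variables indexed by `Fin d × Fin n`). -/
noncomputable def mlin {F : Type*} [Field F] {n d : ℕ} (c : (Fin d → Fin n) → F) :
    MvPolynomial (Fin d × Fin n) F :=
  ∑ i : Fin d → Fin n, MvPolynomial.C (c i) * ∏ k : Fin d, MvPolynomial.X (k, i k)

/-- The `d`-multiquadratic polynomial `Q_M` associated to an `n^d × n^d` matrix `M`. -/
noncomputable def QM {F : Type*} [Field F] {n d : ℕ}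
    (M : Matrix (Fin d → Fin n) (Fin d → Fin n) F) : MvPolynomial (Fin d × Fin n) F :=
  ∑ i : Fin d → Fin n, ∑ j : Fin d → Fin n,
    MvPolynomial.C (M i j) * ∏ k : Fin d, (MvPolynomial.X (k, i k) * MvPolynomial.X (k, j k))

/-- The sum-of-squares complexity of `Q_M`: the least `s` such that `Q_M` is a sum of `s`
squares of `d`-multilinear polynomials. -/
noncomputable def SoSQ {F : Type*} [Field F] {n d : ℕ}
    (M : Matrix (Fin d → Fin n) (Fin d → Fin n) F) : ℕ :=
  sInf { s | ∃ c : Fin s → ((Fin d → Fin n) → F), QM M = ∑ ℓ, (mlin (c ℓ)) ^ 2 }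

section Aux

variable {F : Type*} [Field F] {n d : ℕ}

/-- mixing function underlying `ptrans` -/
def pmix (κ : Finset (Fin d)) (i j : Fin d → Fin n) : Fin d → Fin n :=
  fun k => if k ∈ κ then j k else i k

lemma ptrans_apply (κ : Finset (Fin d)) (M : Matrix (Fin d → Fin n) (Fin d → Fin n) F)
    (i j : Fin d → Fin n) : ptrans κ M i j = M (pmix κ i j) (pmix κ j i) := rfl

lemma pmix_compl (κ : Finset (Fin d)) (i j : Fin d → Fin n) :
    pmix κᶜ i j = pmix κ j i := by
  funext k; by_cases h : k ∈ κ <;> simp [pmix, h]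

lemma ptrans_ptrans (κ : Finset (Fin d)) (A : Matrix (Fin d → Fin n) (Fin d → Fin n) F) :
    ptrans κ (ptrans κ A) = A := by
  funext i j
  show A (pmix κ (pmix κ i j) (pmix κ j i)) (pmix κ (pmix κ j i) (pmix κ i j)) = A i j
  have e1 : pmix κ (pmix κ i j) (pmix κ j i) = i := by
    funext k; by_cases h : k ∈ κ <;> simp [pmix, h]
  have e2 : pmix κ (pmix κ j i) (pmix κ i j) = j := by
    funext k; by_cases h : k ∈ κ <;> simp [pmix, h]
  rw [e1, e2]

lemma ptrans_eq_self (M : Matrix (Fin d → Fin n) (Fin d → Fin n) F)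
    (hsym : ∀ k : Fin d, ptrans {k} M = M) (κ : Finset (Fin d)) : ptrans κ M = M := by
  induction κ using Finset.induction_on with
  | empty =>
    funext i j
    show M (pmix ∅ i j) (pmix ∅ j i) = M i j
    have e1 : ∀ a b : Fin d → Fin n, pmix (∅ : Finset (Fin d)) a b = a := by
      intro a b; funext k; simp [pmix]
    rw [e1, e1]
  | @insert a s ha ih =>
    have key : ptrans (insert a s) M = ptrans {a} (ptrans s M) := by
      funext i j
      show M (pmix (insert a s) i j) (pmix (insert a s) j i)
        = M (pmix s (pmix {a} i j) (pmix {a} j i)) (pmix s (pmix {a} j i) (pmix {a} i j))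
      have e1 : pmix s (pmix {a} i j) (pmix {a} j i) = pmix (insert a s) i j := by
        funext k; by_cases h1 : k ∈ s <;> by_cases h2 : k = a <;>
          simp_all [pmix, Finset.mem_insert]
      have e2 : pmix s (pmix {a} j i) (pmix {a} i j) = pmix (insert a s) j i := by
        funext k; by_cases h1 : k ∈ s <;> by_cases h2 : k = a <;>
          simp_all [pmix, Finset.mem_insert]
      rw [e1, e2]
    rw [key, ih, hsym a]
end Aux

section Aux2
variable {F : Type*} [Field F] {n d : ℕ}

/-- the exponent vector of the monomial `∏_k X_{(k,i_k)} X_{(k,j_k)}`. -/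
noncomputable def Ee (i j : Fin d → Fin n) : (Fin d × Fin n) →₀ ℕ :=
  ∑ k : Fin d, (Finsupp.single (k, i k) 1 + Finsupp.single (k, j k) 1)

lemma Ee_apply (i j : Fin d → Fin n) (k : Fin d) (a : Fin n) :
    Ee i j (k, a) = (if i k = a then 1 else 0) + (if j k = a then 1 else 0) := by
  rw [Ee, Finset.sum_apply']
  rw [Finset.sum_eq_single k]
  · simp [Finsupp.single_apply, Prod.ext_iff]
  · intro b _ hb
    simp [Finsupp.single_apply, Prod.ext_iff, hb]
  · simp

lemma prodX (i j : Fin d → Fin n) :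
    (∏ k : Fin d, (MvPolynomial.X (k, i k) * MvPolynomial.X (k, j k))
        : MvPolynomial (Fin d × Fin n) F)
      = MvPolynomial.monomial (Ee i j) 1 := by
  rw [Ee, MvPolynomial.monomial_sum_one]
  refine Finset.prod_congr rfl fun k _ => ?_
  show MvPolynomial.monomial _ 1 * MvPolynomial.monomial _ 1 = _
  rw [MvPolynomial.monomial_mul, one_mul]

lemma coeff_QM (W : Matrix (Fin d → Fin n) (Fin d → Fin n) F) (u : (Fin d × Fin n) →₀ ℕ) :
    MvPolynomial.coeff u (QM W)
      = ∑ i : Fin d → Fin n, ∑ j : Fin d → Fin n, if Ee i j = u then W i j else 0 := by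
  rw [QM, MvPolynomial.coeff_sum]
  refine Finset.sum_congr rfl fun i _ => ?_
  rw [MvPolynomial.coeff_sum]
  refine Finset.sum_congr rfl fun j _ => ?_
  rw [prodX, MvPolynomial.coeff_C_mul, MvPolynomial.coeff_monomial]
  split_ifs <;> simp

lemma pair_eq {α : Type*} [DecidableEq α] {x y x' y' : α}
    (H : ∀ a : α, ((if x' = a then 1 else 0) + (if y' = a then 1 else 0) : ℕ)
      = (if x = a then 1 else 0) + (if y = a then 1 else 0)) :
    (y = x' ∧ x = y') ∨ (x = x' ∧ y = y') := by
  have hx := H x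
  have hy := H y
  rw [if_pos rfl] at hx
  rw [if_pos rfl] at hy
  by_cases e1 : x' = x
  · subst e1
    by_cases e4 : y' = y
    · subst e4; right; exact ⟨rfl, rfl⟩
    · rw [if_neg e4] at hy
      exfalso
      split_ifs at hy <;> omega
  · rw [if_neg e1] at hx
    have e2 : y' = x := by
      by_contra hc; rw [if_neg hc] at hx; split_ifs at hx <;> omega
    rw [if_pos e2] at hx
    have e5 : ¬ y = x := by
      intro hc; rw [if_pos hc] at hx; omega
    have e6 : ¬ y' = y := fun hc => e5 (hc.symm.trans e2)
    have e7 : ¬ x = y := fun hc => e5 hc.symm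
    rw [if_neg e6, if_neg e7] at hy
    have e8 : x' = y := by
      by_contra hc; rw [if_neg hc] at hy; omega
    left; exact ⟨e8.symm, e2.symm⟩

lemma Ee_eq_iff (i j i' j' : Fin d → Fin n) :
    Ee i' j' = Ee i j
      ↔ ∀ k, (j k = i' k ∧ i k = j' k) ∨ (i k = i' k ∧ j k = j' k) := by
  constructor
  · intro h k
    have H : ∀ a, ((if i' k = a then 1 else 0) + (if j' k = a then 1 else 0) : ℕ)
        = (if i k = a then 1 else 0) + (if j k = a then 1 else 0) := by
      intro a
      rw [← Ee_apply, ← Ee_apply, h]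
    rcases pair_eq H with ⟨h1, h2⟩ | ⟨h1, h2⟩
    · exact Or.inl ⟨h1, h2⟩
    · exact Or.inr ⟨h1, h2⟩
  · intro h
    ext ⟨k, a⟩
    rw [Ee_apply, Ee_apply]
    rcases h k with ⟨h1, h2⟩ | ⟨h1, h2⟩
    · rw [← h1, ← h2, add_comm]
    · rw [← h1, ← h2]

end Aux2

section Aux3
variable {F : Type*} [Field F] {n d : ℕ}

open Finset in
lemma filter_pmix_eq (i j i' j' : Fin d → Fin n) [DecidablePred fun κ : Finset (Fin d) => pmix κ i j = i' ∧ pmix κ j i = j']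
    [DecidablePred fun k : Fin d => ¬ (i k = i' k ∧ j k = j' k)]
    [DecidablePred fun k : Fin d => j k = i' k ∧ i k = j' k] :
    (Finset.univ.filter fun κ : Finset (Fin d) => pmix κ i j = i' ∧ pmix κ j i = j')
      = Finset.Icc (Finset.univ.filter fun k : Fin d => ¬ (i k = i' k ∧ j k = j' k))
          (Finset.univ.filter fun k : Fin d => j k = i' k ∧ i k = j' k) := by
  ext κ
  simp only [Finset.mem_filter, Finset.mem_univ, true_and, Finset.mem_Icc]
  constructor
  · rintro ⟨h1, h2⟩
    constructor
    · intro k hk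
      simp only [Finset.mem_filter, Finset.mem_univ, true_and] at hk
      by_contra hm
      have a1 := congrFun h1 k
      have a2 := congrFun h2 k
      simp only [pmix, if_neg hm] at a1 a2
      exact hk ⟨a1, a2⟩
    · intro k hk
      have a1 := congrFun h1 k
      have a2 := congrFun h2 k
      simp only [pmix, if_pos hk] at a1 a2
      simp only [Finset.mem_filter, Finset.mem_univ, true_and]
      exact ⟨a1, a2⟩
  · rintro ⟨hlo, hhi⟩
    constructor <;> funext k <;> by_cases hm : k ∈ κ
    · have := hhi hm
      simp only [Finset.mem_filter, Finset.mem_univ, true_and] at this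
      simp only [pmix, if_pos hm]
      exact this.1
    · have : k ∉ (Finset.univ.filter fun k : Fin d => ¬ (i k = i' k ∧ j k = j' k)) :=
        fun hc => hm (hlo hc)
      simp only [Finset.mem_filter, Finset.mem_univ, true_and, not_not] at this
      simp only [pmix, if_neg hm]
      exact this.1
    · have := hhi hm
      simp only [Finset.mem_filter, Finset.mem_univ, true_and] at this
      simp only [pmix, if_pos hm]
      exact this.2
    · have : k ∉ (Finset.univ.filter fun k : Fin d => ¬ (i k = i' k ∧ j k = j' k)) :=
        fun hc => hm (hlo hc)
      simp only [Finset.mem_filter, Finset.mem_univ, true_and, not_not] at this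
      simp only [pmix, if_neg hm]
      exact this.2

end Aux3

section Aux4
variable {F : Type*} [Field F] {n d : ℕ}

open Finset Classical in
lemma count_pmix (i j i' j' : Fin d → Fin n) :
    (Finset.univ.filter fun κ : Finset (Fin d) => pmix κ i j = i' ∧ pmix κ j i = j').card
      = if Ee i' j' = Ee i j then
          2 ^ (Finset.univ.filter fun k : Fin d => i k = j k).card
        else 0 := by
  classical
  rw [filter_pmix_eq]
  set lo := Finset.univ.filter fun k : Fin d => ¬ (i k = i' k ∧ j k = j' k) with hlo
  set hi := Finset.univ.filter fun k : Fin d => j k = i' k ∧ i k = j' k with hhi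
  by_cases hsub : lo ⊆ hi
  · rw [Finset.card_Icc_finset hsub]
    rw [if_pos]
    · congr 1
      rw [← Finset.card_sdiff_of_subset hsub]
      congr 1
      ext k
      simp only [hlo, hhi, Finset.mem_sdiff, Finset.mem_filter, Finset.mem_univ, true_and,
        not_not]
      constructor
      · rintro ⟨⟨p1, _⟩, q1, _⟩
        exact q1.trans p1.symm
      · intro hij
        by_cases hQ : i k = i' k ∧ j k = j' k
        · exact ⟨⟨hij.symm.trans hQ.1, hij.trans hQ.2⟩, hQ⟩
        · have hP : k ∈ hi := hsub (by simp only [hlo, Finset.mem_filter, Finset.mem_univ, true_and]; exact hQ)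
          simp only [hhi, Finset.mem_filter, Finset.mem_univ, true_and] at hP
          exact absurd ⟨hij.trans hP.1, hij.symm.trans hP.2⟩ hQ
    · rw [Ee_eq_iff]
      intro k
      by_cases hQ : i k = i' k ∧ j k = j' k
      · exact Or.inr hQ
      · have hP : k ∈ hi := hsub (by simp only [hlo, Finset.mem_filter, Finset.mem_univ, true_and]; exact hQ)
        simp only [hhi, Finset.mem_filter, Finset.mem_univ, true_and] at hP
        exact Or.inl hP
  · rw [Finset.Icc_eq_empty hsub, Finset.card_empty, if_neg]
    intro hE
    apply hsub
    intro k hk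
    simp only [hlo, Finset.mem_filter, Finset.mem_univ, true_and] at hk
    rcases (Ee_eq_iff i j i' j').mp hE k with hP | hQ
    · simp only [hhi, Finset.mem_filter, Finset.mem_univ, true_and]
      exact hP
    · exact absurd hQ hk

end Aux4

section Aux5
variable {F : Type*} [Field F] {n d : ℕ}

lemma sum_pmix_eq (W : Matrix (Fin d → Fin n) (Fin d → Fin n) F) (i j : Fin d → Fin n) :
    ∑ κ : Finset (Fin d), W (pmix κ i j) (pmix κ j i)
      = (2 : F) ^ (Finset.univ.filter fun k : Fin d => i k = j k).card
          * MvPolynomial.coeff (Ee i j) (QM W) := by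
  classical
  have step1 : ∀ κ : Finset (Fin d), W (pmix κ i j) (pmix κ j i)
      = ∑ i' : Fin d → Fin n, ∑ j' : Fin d → Fin n,
          if pmix κ i j = i' ∧ pmix κ j i = j' then W i' j' else 0 := by
    intro κ
    rw [Finset.sum_eq_single (pmix κ i j)]
    · rw [Finset.sum_eq_single (pmix κ j i)]
      · simp
      · intro b _ hb; simp [Ne.symm hb]
      · simp
    · intro b _ hb
      apply Finset.sum_eq_zero
      intro x _
      simp [Ne.symm hb]
    · simp
  calc ∑ κ : Finset (Fin d), W (pmix κ i j) (pmix κ j i)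
      = ∑ κ : Finset (Fin d), ∑ i' : Fin d → Fin n, ∑ j' : Fin d → Fin n,
          if pmix κ i j = i' ∧ pmix κ j i = j' then W i' j' else 0 :=
        Finset.sum_congr rfl fun κ _ => step1 κ
    _ = ∑ i' : Fin d → Fin n, ∑ j' : Fin d → Fin n, ∑ κ : Finset (Fin d),
          if pmix κ i j = i' ∧ pmix κ j i = j' then W i' j' else 0 := by
        rw [Finset.sum_comm]
        exact Finset.sum_congr rfl fun i' _ => Finset.sum_comm
    _ = ∑ i' : Fin d → Fin n, ∑ j' : Fin d → Fin n,
          W i' j' * ((Finset.univ.filter fun κ : Finset (Fin d) =>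
            pmix κ i j = i' ∧ pmix κ j i = j').card : F) := by
        refine Finset.sum_congr rfl fun i' _ => Finset.sum_congr rfl fun j' _ => ?_
        have h0 : ∀ κ : Finset (Fin d),
            (if pmix κ i j = i' ∧ pmix κ j i = j' then W i' j' else 0)
              = W i' j' * (if pmix κ i j = i' ∧ pmix κ j i = j' then (1 : F) else 0) := by
          intro κ; split_ifs <;> simp
        rw [Finset.sum_congr rfl fun κ _ => h0 κ, ← Finset.mul_sum, Finset.sum_boole]
    _ = (2 : F) ^ (Finset.univ.filter fun k : Fin d => i k = j k).card
          * MvPolynomial.coeff (Ee i j) (QM W) := by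
        rw [coeff_QM, Finset.mul_sum]
        refine Finset.sum_congr rfl fun i' _ => ?_
        rw [Finset.mul_sum]
        refine Finset.sum_congr rfl fun j' _ => ?_
        rw [count_pmix]
        split_ifs with h
        · push_cast
          ring
        · simp

end Aux5

section Aux6
variable {F : Type*} [Field F] {n d : ℕ}

lemma QM_of_sq (s : ℕ) (c : Fin s → ((Fin d → Fin n) → F)) :
    (∑ ℓ, (mlin (c ℓ)) ^ 2 : MvPolynomial (Fin d × Fin n) F)
      = QM (fun a b => ∑ ℓ, c ℓ a * c ℓ b) := by
  have expand : ∀ ℓ, (mlin (c ℓ)) ^ 2 = ∑ a : Fin d → Fin n, ∑ b : Fin d → Fin n,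
      MvPolynomial.C (c ℓ a * c ℓ b)
        * ∏ k : Fin d, (MvPolynomial.X (k, a k) * MvPolynomial.X (k, b k)) := by
    intro ℓ
    rw [mlin, sq, Finset.sum_mul_sum]
    refine Finset.sum_congr rfl fun a _ => Finset.sum_congr rfl fun b _ => ?_
    rw [MvPolynomial.C_mul, Finset.prod_mul_distrib]
    ring
  rw [Finset.sum_congr rfl fun ℓ _ => expand ℓ]; unfold QM
  rw [Finset.sum_comm]
  refine Finset.sum_congr rfl fun a _ => ?_
  rw [Finset.sum_comm]
  refine Finset.sum_congr rfl fun b _ => ?_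
  rw [← Finset.sum_mul, ← map_sum]

lemma sum_all_eq_two_mul (R : Matrix (Fin d → Fin n) (Fin d → Fin n) F)
    (hR : ∀ a b, R a b = R b a) (e : Fin d) (i j : Fin d → Fin n)
    [DecidablePred fun κ : Finset (Fin d) => e ∉ κ] :
    ∑ κ : Finset (Fin d), R (pmix κ i j) (pmix κ j i)
      = 2 * ∑ κ ∈ Finset.univ.filter (fun κ : Finset (Fin d) => e ∉ κ),
          R (pmix κ i j) (pmix κ j i) := by
  classical
  rw [two_mul]
  nth_rewrite 1 [← Finset.sum_filter_add_sum_filter_not Finset.univ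
    (fun κ : Finset (Fin d) => e ∉ κ)]
  congr 1
  refine Finset.sum_bij' (fun κ _ => κᶜ) (fun κ _ => κᶜ) ?_ ?_ ?_ ?_ ?_
  · intro κ hκ
    simp only [Finset.mem_filter, Finset.mem_univ, true_and, not_not] at hκ ⊢
    simp [Finset.mem_compl, hκ]
  · intro κ hκ
    simp only [Finset.mem_filter, Finset.mem_univ, true_and, not_not] at hκ ⊢
    simp [Finset.mem_compl, hκ]
  · intro κ _; simp
  · intro κ _; simp
  · intro κ hκ
    rw [pmix_compl, pmix_compl, hR]

end Aux6

section Aux7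
variable {F : Type*} [Field F]

lemma rank_scaled_sq (α : Type*) [Fintype α] [DecidableEq α] (u : F) (hu : u ≠ 0)
    (v : α → F) (hv : v ≠ 0) :
    (Matrix.of fun a b => u * v a * v b : Matrix α α F).rank = 1 := by
  obtain ⟨a0, ha0⟩ := Function.ne_iff.mp hv
  set A : Matrix α α F := Matrix.of fun a b => u * v a * v b with hA
  have hle : A.rank ≤ 1 := by
    have hfac : A = Matrix.replicateCol Unit (fun a => u * v a) * Matrix.replicateRow Unit v := by
      rw [← Matrix.vecMulVec_eq]
      ext a b
      simp [hA, Matrix.vecMulVec, mul_assoc]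
    rw [hfac]
    exact le_trans (Matrix.rank_mul_le_left _ _)
      (le_trans (Matrix.rank_le_card_width _) (by simp))
  have hne : A.rank ≠ 0 := by
    intro h0
    rw [Matrix.rank] at h0
    have hrange : LinearMap.range A.mulVecLin = ⊥ := Submodule.finrank_eq_zero.mp h0
    have hz := LinearMap.range_eq_bot.mp hrange
    have h1 : A.mulVecLin (Pi.single a0 1) = 0 := by rw [hz]; rfl
    have h2 := congrFun h1 a0
    have h3 : A.mulVecLin (Pi.single a0 1) a0 = u * v a0 * v a0 := by
      simp [Matrix.mulVecLin_apply, Matrix.mulVec, dotProduct, Pi.single_apply, hA]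
    rw [h3] at h2
    exact (mul_ne_zero (mul_ne_zero hu ha0) ha0) h2
  omega

end Aux7

set_option maxHeartbeats 1000000 in
/-- Over a field of characteristic ≠ 2, if `M` is fully symmetric (`M^{⊤_k} = M` for all
`k ∈ [d]`) and `Q_M` admits some sum-of-squares decomposition into squares of
`d`-multilinear polynomials, then `PT-rank(M) ≤ 2^{d-1} · SoS(Q_M)`. -/
theorem stmt8 {F : Type*} [Field F] (h2 : (2 : F) ≠ 0) {n d : ℕ} (hd : 1 ≤ d)
    (M : Matrix (Fin d → Fin n) (Fin d → Fin n) F)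
    (hsym : ∀ k : Fin d, ptrans {k} M = M)
    (hfin : ∃ s : ℕ, ∃ c : Fin s → ((Fin d → Fin n) → F), QM M = ∑ ℓ, (mlin (c ℓ)) ^ 2) :
    PTrank M ≤ 2 ^ (d - 1) * SoSQ M := by
  classical
  have hne : { s | ∃ c : Fin s → ((Fin d → Fin n) → F),
      QM M = ∑ ℓ, (mlin (c ℓ)) ^ 2 }.Nonempty := hfin
  obtain ⟨c, hc⟩ : ∃ c : Fin (SoSQ M) → ((Fin d → Fin n) → F),
      QM M = ∑ ℓ, (mlin (c ℓ)) ^ 2 := Nat.sInf_mem hne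
  set e : Fin d := ⟨0, hd⟩ with he
  set R : Matrix (Fin d → Fin n) (Fin d → Fin n) F :=
    fun a b => ∑ ℓ, c ℓ a * c ℓ b with hRdef
  have hQR : QM M = QM R := by rw [hc]; exact QM_of_sq _ c
  have hRsym : ∀ a b, R a b = R b a := by
    intro a b
    exact Finset.sum_congr rfl fun ℓ _ => mul_comm _ _
  have h2p : ((2 : F) ^ (d - 1)) ≠ 0 := pow_ne_zero _ h2
  set u : F := ((2 : F) ^ (d - 1))⁻¹ with hu
  have hu0 : u ≠ 0 := inv_ne_zero h2p
  set K : Finset (Finset (Fin d)) :=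
    Finset.univ.filter (fun κ : Finset (Fin d) => e ∉ κ) with hK
  have hpoint : ∀ i j : Fin d → Fin n,
      ∑ κ ∈ K, R (pmix κ i j) (pmix κ j i) = 2 ^ (d - 1) * M i j := by
    intro i j
    have hM : ∀ κ : Finset (Fin d), M (pmix κ i j) (pmix κ j i) = M i j := by
      intro κ
      rw [show M (pmix κ i j) (pmix κ j i) = ptrans κ M i j from rfl,
        ptrans_eq_self M hsym]
    have hall : ∑ κ : Finset (Fin d), M (pmix κ i j) (pmix κ j i)
        = 2 ^ d * M i j := by
      rw [Finset.sum_congr rfl fun κ _ => hM κ, Finset.sum_const, Finset.card_univ,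
        Fintype.card_finset, Fintype.card_fin, nsmul_eq_mul]
      push_cast
      ring
    have hMR : ∑ κ : Finset (Fin d), M (pmix κ i j) (pmix κ j i)
        = ∑ κ : Finset (Fin d), R (pmix κ i j) (pmix κ j i) := by
      rw [sum_pmix_eq, sum_pmix_eq, hQR]
    have h2all := sum_all_eq_two_mul R hRsym e i j
    have hfin2 : 2 * ∑ κ ∈ K, R (pmix κ i j) (pmix κ j i)
        = 2 * (2 ^ (d - 1) * M i j) := by
      have hpow : (2 : F) ^ d = 2 * (2 : F) ^ (d - 1) := by
        rw [← pow_succ']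
        congr 1
        omega
      rw [← h2all, ← hMR, hall, hpow]
      ring
    exact mul_left_cancel₀ h2 hfin2
  set B : Finset (Fin d) × Fin (SoSQ M) → Matrix (Fin d → Fin n) (Fin d → Fin n) F :=
    fun p => ptrans p.1 (Matrix.of fun a b => u * c p.2 a * c p.2 b) with hB
  have hmain : M = ∑ p ∈ K ×ˢ Finset.univ, B p := by
    ext i j
    rw [Matrix.sum_apply, Finset.sum_product]
    have hstep : ∀ κ ∈ K, (∑ ℓ : Fin (SoSQ M), B (κ, ℓ) i j)
        = u * R (pmix κ i j) (pmix κ j i) := by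
      intro κ _
      have hBij : ∀ ℓ : Fin (SoSQ M), B (κ, ℓ) i j
          = u * (c ℓ (pmix κ i j) * c ℓ (pmix κ j i)) := by
        intro ℓ
        show u * c ℓ (pmix κ i j) * c ℓ (pmix κ j i) = _
        ring
      rw [Finset.sum_congr rfl fun ℓ _ => hBij ℓ, ← Finset.mul_sum]
    rw [Finset.sum_congr rfl hstep, ← Finset.mul_sum, hpoint i j, hu,
      inv_mul_cancel_left₀ h2p]
  set T : Finset (Finset (Fin d) × Fin (SoSQ M)) :=
    (K ×ˢ Finset.univ).filter (fun p => c p.2 ≠ 0) with hT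
  have hzero : ∀ p ∈ K ×ˢ (Finset.univ : Finset (Fin (SoSQ M))), p ∉ T → B p = 0 := by
    intro p hp hnp
    have hc0 : c p.2 = 0 := by
      by_contra hcc
      refine hnp ?_
      simp only [hT, Finset.mem_filter]
      exact ⟨hp, hcc⟩
    ext a b
    show u * c p.2 (pmix p.1 a b) * c p.2 (pmix p.1 b a) = (0 : F)
    simp [hc0]
  have hsumT : M = ∑ p ∈ T, B p :=
    hmain.trans (Finset.sum_subset (Finset.filter_subset _ _) hzero).symm
  have hbasic : ∀ p ∈ T, IsPTBasic (B p) := by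
    intro p hp
    have hc0 : c p.2 ≠ 0 := (Finset.mem_filter.mp hp).2
    refine ⟨p.1, ?_⟩
    rw [show B p = ptrans p.1 (Matrix.of fun a b => u * c p.2 a * c p.2 b) from rfl,
      ptrans_ptrans]
    exact rank_scaled_sq _ u hu0 (c p.2) hc0
  have hcard : T.card ≤ 2 ^ (d - 1) * SoSQ M := by
    refine le_trans (Finset.card_filter_le _ _) ?_
    rw [Finset.card_product]
    have hKcard : K.card = 2 ^ (d - 1) := by
      have hKeq : K = (Finset.univ.erase e).powerset := by
        ext κ
        simp [hK, Finset.mem_powerset, Finset.subset_erase]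
      rw [hKeq, Finset.card_powerset, Finset.card_erase_of_mem (Finset.mem_univ e),
        Finset.card_univ, Fintype.card_fin]
    rw [hKcard, Finset.card_univ, Fintype.card_fin]
  refine le_trans (Nat.sInf_le ?_) hcard
  have eT : (T : Type _) ≃ Fin T.card := Fintype.equivFinOfCardEq (Fintype.card_coe T)
  refine ⟨fun m => B ((eT.symm m : T) : Finset (Fin d) × Fin (SoSQ M)),
    fun m => hbasic _ (Finset.coe_mem _), ?_⟩
  refine hsumT.trans ?_
  rw [← Finset.sum_coe_sort T B]
  exact (Equiv.sum_comp eT.symm (fun x : T => B (x : Finset (Fin d) × Fin (SoSQ M)))).symm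
end

section
/- For every n^d × n^d matrix M over a field F, PT-rank(M) = n^{d+1} · ρ(PaddedTensor(M)), where PaddedTensor(M) : [n]^{2d+2} → F is defined by PaddedTensor(M)(p, i_1, j_1, i_2, …, j_{d−1}, i_d, j_d, q) = 1[p = q = 1] · M_{(i_1,…,i_d),(j_1,…,j_d)}. -/
open Matrix BigOperators

/-- Membership function of the row-index set `I_{a,α,b} ⊆ [2d]` (here `d = e+1`,
0-indexed coordinates `0,…,2e+1` standing for `1,…,2d`): coordinate `1` (i.e. `t = 0`)
belongs to `I` iff `a = 1`; coordinate `2d` (i.e. `t = 2e+1`) belongs to `I` iff `b = 0`;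
and for `k ∈ [d-1]` exactly one of the coordinates `2k, 2k+1` belongs to `I`, as selected
by `α_k`. -/
def ptI (e : ℕ) (a b : Bool) (α : Fin e → Bool) : Finset (Fin (2 * e + 2)) :=
  Finset.univ.filter fun t =>
    (if _h0 : (t : ℕ) = 0 then a
     else if _hl : (t : ℕ) = 2 * e + 1 then !b
     else (α ⟨((t : ℕ) - 1) / 2, by have := t.isLt; omega⟩ ==
        decide (((t : ℕ) - 1) % 2 = 1))) = true

/-- The matrix flattening `Mat_{S,Sᶜ}(A)` of an order-`m` tensor, with rows reading the
coordinates in `S` and columns the coordinates in the complement.  (Rows and columns are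
indexed by full assignments, which duplicates rows/columns but preserves the rank.) -/
def flat {F : Type*} [Field F] {n m : ℕ} (S : Finset (Fin m)) (A : (Fin m → Fin n) → F) :
    Matrix (Fin m → Fin n) (Fin m → Fin n) F :=
  fun x y => A (fun t => if t ∈ S then x t else y t)

/-- The relative rank `relrk_{a,α,b}(A) = n^{-d} · rank(Mat_{I_{a,α,b},J_{a,α,b}}(A))`
of an order-`2d` tensor (`d = e+1`). -/
noncomputable def relrk {F : Type*} [Field F] (n e : ℕ) (a b : Bool) (α : Fin e → Bool)
    (A : (Fin (2 * e + 2) → Fin n) → F) : ℝ :=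
  ((flat (ptI e a b α) A).rank : ℝ) / (n : ℝ) ^ (e + 1)

/-- The complexity measure
`ρ(A) = max_{a,b} min_{{X_α} ⊢ A} ∑_α relrk_{a,α,b}(X_α)` on order-`2d` tensors. -/
noncomputable def rho {F : Type*} [Field F] (n e : ℕ)
    (A : (Fin (2 * e + 2) → Fin n) → F) : ℝ :=
  ⨆ a : Bool, ⨆ b : Bool,
    sInf { r : ℝ | ∃ X : (Fin e → Bool) → ((Fin (2 * e + 2) → Fin n) → F),
      (∑ α, X α) = A ∧ r = ∑ α, relrk n e a b α (X α) }

/-- The padded order-`(2d+2)` tensor of an `n^d × n^d` matrix: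
`PaddedTensor(M)(p, i_1, j_1, …, i_d, j_d, q) = 1[p = q = 1] · M_{(i…),(j…)}`. -/
def padded {F : Type*} [Field F] {n d : ℕ} [NeZero n]
    (M : Matrix (Fin d → Fin n) (Fin d → Fin n) F) : (Fin (2 * d + 2) → Fin n) → F :=
  fun x =>
    if x ⟨0, by omega⟩ = 0 ∧ x ⟨2 * d + 1, by omega⟩ = 0 then
      M (fun k => x ⟨2 * (k : ℕ) + 1, by have := k.isLt; omega⟩)
        (fun k => x ⟨2 * (k : ℕ) + 2, by have := k.isLt; omega⟩)
    else 0

/- ===== auxiliary machinery ===== -/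

section RankToolbox
variable {F : Type*} [Field F]

lemma myrank_add_le {m n : Type*} [Fintype n] [Fintype m] (A B : Matrix m n F) :
    (A + B).rank ≤ A.rank + B.rank := by
  classical
  unfold Matrix.rank
  rw [mulVecLin_add]
  have h : LinearMap.range (A.mulVecLin + B.mulVecLin) ≤
      LinearMap.range A.mulVecLin ⊔ LinearMap.range B.mulVecLin := by
    rintro x ⟨y, rfl⟩
    exact Submodule.add_mem_sup (LinearMap.mem_range_self _ y) (LinearMap.mem_range_self _ y)
  calc Module.finrank F ↥(LinearMap.range (A.mulVecLin + B.mulVecLin))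
      ≤ Module.finrank F ↥(LinearMap.range A.mulVecLin ⊔ LinearMap.range B.mulVecLin) :=
        Submodule.finrank_mono h
    _ ≤ _ := Submodule.finrank_add_le_finrank_add_finrank _ _

lemma myrank_sum_le {m n ι : Type*} [Fintype n] [Fintype m] (s : Finset ι)
    (f : ι → Matrix m n F) : (∑ i ∈ s, f i).rank ≤ ∑ i ∈ s, (f i).rank := by
  classical
  induction s using Finset.induction with
  | empty => simp
  | insert _ _ h ih =>
      rw [Finset.sum_insert h, Finset.sum_insert h]
      exact (myrank_add_le _ _).trans (by omega)

lemma myrank_eq_zero {m n : Type*} [Fintype n] [Fintype m] [DecidableEq n]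
    (A : Matrix m n F) (h : A.rank = 0) : A = 0 := by
  classical
  have h2 : LinearMap.range A.mulVecLin = ⊥ :=
    (Submodule.finrank_eq_zero (R := F) (S := LinearMap.range A.mulVecLin)).mp h
  ext i j
  have : A.mulVec (Pi.single j 1) = 0 := by
    have : A.mulVecLin (Pi.single j 1) ∈ (⊥ : Submodule F (m → F)) :=
      h2 ▸ LinearMap.mem_range_self _ _
    simpa using this
  simpa [mulVec_single] using congrFun this i

lemma myrank_submatrix_le' {m n m' n' : Type*} [Fintype n] [Fintype m] [Fintype m'] [Fintype n']
    [DecidableEq m] [DecidableEq n] (A : Matrix m n F) (f : m' → m) (g : n' → n) :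
    (A.submatrix f g).rank ≤ A.rank := by
  classical
  have hfac : A.submatrix f g =
      (Matrix.of fun i k => if f i = k then (1 : F) else 0) * A *
      (Matrix.of fun k j => if k = g j then (1 : F) else 0) := by
    ext i j
    simp [Matrix.mul_apply, ite_mul, mul_ite, Finset.sum_ite_eq, Finset.sum_ite_eq']
  rw [hfac]
  exact (Matrix.rank_mul_le_left _ _).trans (Matrix.rank_mul_le_right _ _)

lemma myrank_le_one_vecMulVec {m n : Type*} [Fintype n] [Fintype m]
    (u : m → F) (v : n → F) : (vecMulVec u v).rank ≤ 1 := by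
  classical
  rw [vecMulVec_eq (Fin 1)]
  exact (Matrix.rank_mul_le_left _ _).trans
    ((Matrix.rank_le_card_width _).trans (by simp))

lemma exists_rank_one_decomp {m n : Type*} [Fintype m] [Fintype n] [DecidableEq m] [DecidableEq n]
    (A : Matrix m n F) :
    ∃ (k : ℕ) (_ : k ≤ A.rank) (B : Fin k → Matrix m n F),
      (∀ i, (B i).rank = 1) ∧ A = ∑ i, B i := by
  classical
  set V := Submodule.span F (Set.range Aᵀ) with hV
  have hr : Module.finrank F V = A.rank := (Matrix.rank_eq_finrank_span_cols A).symm
  set b := Module.finBasis F V with hb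
  have hj : ∀ j, Aᵀ j ∈ V := fun j => Submodule.subset_span ⟨j, rfl⟩
  set C : Fin (Module.finrank F V) → Matrix m n F :=
    fun i => vecMulVec (fun x => ((b i : V) : m → F) x)
      (fun j => b.repr ⟨Aᵀ j, hj j⟩ i) with hC
  have hsum : A = ∑ i, C i := by
    ext x j
    have h1 := b.sum_repr ⟨Aᵀ j, hj j⟩
    have h2 := congrFun (congrArg (Subtype.val) h1) x
    simp only [Submodule.coe_sum, Submodule.coe_smul, Finset.sum_apply, Pi.smul_apply,
      smul_eq_mul] at h2
    calc A x j = ∑ i, b.repr ⟨Aᵀ j, hj j⟩ i * ((b i : V) : m → F) x := h2.symm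
      _ = (∑ i, C i) x j := by
          simp [hC, vecMulVec, Matrix.sum_apply, mul_comm]
  set s : Finset (Fin (Module.finrank F V)) := Finset.univ.filter (fun i => C i ≠ 0) with hs
  have h0 : ∀ i ∈ Finset.univ, i ∉ s → C i = 0 := by
    intro i _ hi
    by_contra hne
    exact hi (Finset.mem_filter.mpr ⟨Finset.mem_univ _, hne⟩)
  refine ⟨s.card, le_trans (le_trans (Finset.card_filter_le _ _) (by simp)) hr.le,
    fun t => C (s.equivFin.symm t), fun t => ?_, ?_⟩
  · have hmem : (s.equivFin.symm t : Fin _) ∈ s := (s.equivFin.symm t).2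
    have hne : C (s.equivFin.symm t : Fin _) ≠ 0 := (Finset.mem_filter.mp hmem).2
    have hle : (C (s.equivFin.symm t : Fin _)).rank ≤ 1 := myrank_le_one_vecMulVec _ _
    have hnz : (C (s.equivFin.symm t : Fin _)).rank ≠ 0 := fun h => hne (myrank_eq_zero _ h)
    exact le_antisymm hle (Nat.one_le_iff_ne_zero.mpr hnz)
  · rw [hsum]
    calc ∑ i, C i = ∑ i ∈ s, C i := (Finset.sum_subset s.subset_univ h0).symm
      _ = ∑ i ∈ s.attach, C i.1 := (Finset.sum_attach s fun i => C i).symm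
      _ = ∑ t, C (s.equivFin.symm t) := by
          rw [← Finset.univ_eq_attach]
          exact Fintype.sum_equiv s.equivFin _ _ (fun i => by simp)

end RankToolbox

section PTside
variable {F : Type*} [Field F] {n d : ℕ}

lemma ptrans_sum {ι : Type*} (κ : Finset (Fin d)) (s : Finset ι)
    (f : ι → Matrix (Fin d → Fin n) (Fin d → Fin n) F) :
    ptrans κ (∑ i ∈ s, f i) = ∑ i ∈ s, ptrans κ (f i) := by
  funext i j
  simp [ptrans, Matrix.sum_apply]

lemma ptrans_empty (A : Matrix (Fin d → Fin n) (Fin d → Fin n) F) :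
    ptrans (∅ : Finset (Fin d)) A = A := by
  funext i j; simp [ptrans]

end PTside

/-- the `Finset` associated to a boolean vector -/
def kap {d : ℕ} (α : Fin d → Bool) : Finset (Fin d) := Finset.univ.filter (fun k => α k = true)

lemma mem_kap {d : ℕ} (α : Fin d → Bool) (k : Fin d) : k ∈ kap α ↔ α k = true := by
  simp [kap]

lemma kap_decide {d : ℕ} (κ : Finset (Fin d)) : kap (fun k => decide (k ∈ κ)) = κ := by
  ext k; simp [kap]

section PTrankLemmas
variable {F : Type*} [Field F] {n d : ℕ}

lemma PTrank_set_nonempty (M : Matrix (Fin d → Fin n) (Fin d → Fin n) F) :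
    { r | ∃ P : Fin r → Matrix (Fin d → Fin n) (Fin d → Fin n) F,
      (∀ i, IsPTBasic (P i)) ∧ M = ∑ i, P i }.Nonempty := by
  obtain ⟨k, -, B, hB1, hB2⟩ := exists_rank_one_decomp M
  exact ⟨k, B, fun i => ⟨∅, by rw [ptrans_empty]; exact hB1 i⟩, hB2⟩

lemma PTrank_le_sum (M : Matrix (Fin d → Fin n) (Fin d → Fin n) F)
    (N : (Fin d → Bool) → Matrix (Fin d → Fin n) (Fin d → Fin n) F)
    (hN : ∑ α, N α = M) :
    PTrank M ≤ ∑ α, (ptrans (kap α) (N α)).rank := by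
  classical
  have h : ∀ α, ∃ (k : ℕ) (_ : k ≤ (ptrans (kap α) (N α)).rank)
      (B : Fin k → Matrix (Fin d → Fin n) (Fin d → Fin n) F),
      (∀ i, (B i).rank = 1) ∧ ptrans (kap α) (N α) = ∑ i, B i :=
    fun α => exists_rank_one_decomp _
  choose k hk B hB1 hB2 using h
  set Q : (Σ α : Fin d → Bool, Fin (k α)) → Matrix (Fin d → Fin n) (Fin d → Fin n) F :=
    fun σ => ptrans (kap σ.1) (B σ.1 σ.2) with hQ
  set e := Fintype.equivFin (Σ α : Fin d → Bool, Fin (k α)) with he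
  have hcard : Fintype.card (Σ α : Fin d → Bool, Fin (k α)) = ∑ α, k α := by
    simp [Fintype.card_sigma]
  have hmem : Fintype.card (Σ α : Fin d → Bool, Fin (k α)) ∈
      { r | ∃ P : Fin r → Matrix (Fin d → Fin n) (Fin d → Fin n) F,
        (∀ i, IsPTBasic (P i)) ∧ M = ∑ i, P i } := by
    refine ⟨fun t => Q (e.symm t), fun t => ⟨kap (e.symm t).1, ?_⟩, ?_⟩
    · rw [hQ]; simp only []
      rw [ptrans_ptrans]
      exact hB1 _ _
    · have h1 : ∑ t, Q (e.symm t) = ∑ σ, Q σ :=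
        Fintype.sum_equiv e.symm _ _ (fun t => rfl)
      have h2 : ∀ α, ∑ i, Q ⟨α, i⟩ = N α := by
        intro α
        rw [hQ]; simp only []
        rw [← ptrans_sum, ← hB2, ptrans_ptrans]
      rw [h1, ← Finset.univ_sigma_univ, Finset.sum_sigma]
      calc M = ∑ α, N α := hN.symm
        _ = ∑ α, ∑ i, Q ⟨α, i⟩ := Finset.sum_congr rfl fun α _ => (h2 α).symm
  have hle := Nat.sInf_le hmem
  calc PTrank M ≤ Fintype.card (Σ α : Fin d → Bool, Fin (k α)) := hle
    _ = ∑ α, k α := hcard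
    _ ≤ ∑ α, (ptrans (kap α) (N α)).rank := Finset.sum_le_sum (fun α _ => hk α)

end PTrankLemmas

section Combinatorics
variable {d : ℕ}

def idx0 : Fin (2*d+2) := ⟨0, by omega⟩
def idxL : Fin (2*d+2) := ⟨2*d+1, by omega⟩
def idxO (k : Fin d) : Fin (2*d+2) := ⟨2*(k:ℕ)+1, by have := k.isLt; omega⟩
def idxE (k : Fin d) : Fin (2*d+2) := ⟨2*(k:ℕ)+2, by have := k.isLt; omega⟩

variable (a b : Bool) (α : Fin d → Bool)

lemma mem_ptI_zero : idx0 ∈ ptI d a b α ↔ a = true := by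
  simp [ptI, idx0]

lemma mem_ptI_last : idxL ∈ ptI d a b α ↔ b = false := by
  have h1 : ((idxL : Fin (2*d+2)) : ℕ) ≠ 0 := by simp [idxL]
  simp only [ptI, Finset.mem_filter, Finset.mem_univ, true_and, dif_neg h1]
  rw [dif_pos (by simp [idxL])]
  simp

lemma mem_ptI_mid (t : Fin (2*d+2)) (h0 : (t:ℕ) ≠ 0) (hL : (t:ℕ) ≠ 2*d+1) :
    t ∈ ptI d a b α ↔
      α ⟨((t : ℕ) - 1) / 2, by have := t.isLt; omega⟩ = decide (((t : ℕ) - 1) % 2 = 1) := by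
  simp only [ptI, Finset.mem_filter, Finset.mem_univ, true_and, dif_neg h0, dif_neg hL,
    beq_iff_eq]

lemma mem_ptI_odd (k : Fin d) : idxO k ∈ ptI d a b α ↔ α k = false := by
  have h1 : ((idxO (d:=d) k : Fin (2*d+2)) : ℕ) = 2*(k:ℕ)+1 := rfl
  rw [mem_ptI_mid a b α (idxO k) (by rw [h1]; omega) (by rw [h1]; have := k.isLt; omega)]
  simp only [h1, show (2*(k:ℕ)+1-1)/2 = (k:ℕ) from by omega,
    show (2*(k:ℕ)+1-1)%2 = 0 from by omega, Fin.eta]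
  simp

lemma mem_ptI_even (k : Fin d) : idxE k ∈ ptI d a b α ↔ α k = true := by
  have h1 : ((idxE (d:=d) k : Fin (2*d+2)) : ℕ) = 2*(k:ℕ)+2 := rfl
  rw [mem_ptI_mid a b α (idxE k) (by rw [h1]; omega) (by rw [h1]; have := k.isLt; omega)]
  simp only [h1, show (2*(k:ℕ)+2-1)/2 = (k:ℕ) from by omega,
    show (2*(k:ℕ)+2-1)%2 = 1 from by omega, Fin.eta]
  simp

end Combinatorics

section Padded
variable {F : Type*} [Field F] {n d : ℕ} [NeZero n]

/-- mixed assignment used to slice out the pad coordinates -/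
def mix (i j : Fin d → Fin n) : Fin (2*d+2) → Fin n := fun t =>
  if h0 : (t:ℕ) = 0 then 0 else if hL : (t:ℕ) = 2*d+1 then 0
  else if ((t:ℕ)-1) % 2 = 0 then i ⟨((t:ℕ)-1)/2, by have := t.isLt; omega⟩
       else j ⟨((t:ℕ)-1)/2, by have := t.isLt; omega⟩

noncomputable def pslice (X : (Fin (2*d+2) → Fin n) → F) :
    Matrix (Fin d → Fin n) (Fin d → Fin n) F :=
  fun i j => X (mix i j)

lemma mix_zero (i j : Fin d → Fin n) : mix i j idx0 = 0 := by simp [mix, idx0]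
lemma mix_last (i j : Fin d → Fin n) : mix i j idxL = 0 := by
  have h1 : ((idxL : Fin (2*d+2)) : ℕ) = 2*d+1 := rfl
  simp only [mix]
  rw [dif_neg (by rw [h1]; omega), dif_pos h1]
lemma mix_odd (i j : Fin d → Fin n) (k : Fin d) : mix i j (idxO k) = i k := by
  have h1 : ((idxO (d:=d) k : Fin (2*d+2)) : ℕ) = 2*(k:ℕ)+1 := rfl
  simp only [mix]
  rw [dif_neg (by rw [h1]; omega), dif_neg (by rw [h1]; have := k.isLt; omega),
    if_pos (by rw [h1]; omega)]
  simp only [h1, show (2*(k:ℕ)+1-1)/2 = (k:ℕ) from by omega, Fin.eta]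
lemma mix_even (i j : Fin d → Fin n) (k : Fin d) : mix i j (idxE k) = j k := by
  have h1 : ((idxE (d:=d) k : Fin (2*d+2)) : ℕ) = 2*(k:ℕ)+2 := rfl
  simp only [mix]
  rw [dif_neg (by rw [h1]; omega), dif_neg (by rw [h1]; have := k.isLt; omega),
    if_neg (by rw [h1]; omega)]
  simp only [h1, show (2*(k:ℕ)+2-1)/2 = (k:ℕ) from by omega, Fin.eta]

lemma pslice_padded (M : Matrix (Fin d → Fin n) (Fin d → Fin n) F) :
    pslice (padded M) = M := by
  funext i j
  show padded M (mix i j) = M i j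
  rw [padded]
  rw [if_pos ⟨mix_zero i j, mix_last i j⟩]
  congr 1 <;> funext k
  · exact mix_odd i j k
  · exact mix_even i j k

lemma pslice_sum {ι : Type*} (s : Finset ι) (X : ι → ((Fin (2*d+2) → Fin n) → F)) :
    pslice (∑ i ∈ s, X i) = ∑ i ∈ s, pslice (X i) := by
  funext i j
  simp [pslice, Matrix.sum_apply]

lemma padded_sum {ι : Type*} (s : Finset ι)
    (f : ι → Matrix (Fin d → Fin n) (Fin d → Fin n) F) :
    padded (∑ i ∈ s, f i) = ∑ i ∈ s, padded (f i) := by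
  funext x
  simp only [padded, Matrix.sum_apply, Finset.sum_apply]
  split <;> simp

/-- padded embedding of a tuple -/
def emb (v : Fin d → Fin n) : Fin (2*d+2) → Fin n := fun t =>
  if h0 : (t:ℕ) = 0 then 0 else if hL : (t:ℕ) = 2*d+1 then 0
  else v ⟨((t:ℕ)-1)/2, by have := t.isLt; omega⟩

lemma emb_zero (v : Fin d → Fin n) : emb v (idx0 : Fin (2*d+2)) = 0 := by
  simp [emb, idx0]
lemma emb_last (v : Fin d → Fin n) : emb v (idxL : Fin (2*d+2)) = 0 := by
  have h1 : ((idxL : Fin (2*d+2)) : ℕ) = 2*d+1 := rfl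
  simp only [emb]
  rw [dif_neg (by rw [h1]; omega), dif_pos h1]
lemma emb_odd (v : Fin d → Fin n) (k : Fin d) : emb v (idxO k) = v k := by
  have h1 : ((idxO (d:=d) k : Fin (2*d+2)) : ℕ) = 2*(k:ℕ)+1 := rfl
  simp only [emb]
  rw [dif_neg (by rw [h1]; omega), dif_neg (by rw [h1]; have := k.isLt; omega)]
  simp only [h1, show (2*(k:ℕ)+1-1)/2 = (k:ℕ) from by omega, Fin.eta]
lemma emb_even (v : Fin d → Fin n) (k : Fin d) : emb v (idxE k) = v k := by
  have h1 : ((idxE (d:=d) k : Fin (2*d+2)) : ℕ) = 2*(k:ℕ)+2 := rfl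
  simp only [emb]
  rw [dif_neg (by rw [h1]; omega), dif_neg (by rw [h1]; have := k.isLt; omega)]
  simp only [h1, show (2*(k:ℕ)+2-1)/2 = (k:ℕ) from by omega, Fin.eta]

lemma ptrans_pslice_eq_submatrix (a b : Bool) (α : Fin d → Bool)
    (X : (Fin (2*d+2) → Fin n) → F) :
    ptrans (kap α) (pslice X) = (flat (ptI d a b α) X).submatrix emb emb := by
  funext i j
  show X (mix _ _) = X _
  congr 1
  funext t
  by_cases h0 : (t:ℕ) = 0
  · have ht : t = idx0 := by ext; exact h0
    subst ht
    rw [mix_zero]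
    by_cases hS : (idx0 : Fin (2*d+2)) ∈ ptI d a b α
    · rw [if_pos hS, emb_zero]
    · rw [if_neg hS, emb_zero]
  by_cases hL : (t:ℕ) = 2*d+1
  · have ht : t = idxL := by ext; exact hL
    subst ht
    rw [mix_last]
    by_cases hS : (idxL : Fin (2*d+2)) ∈ ptI d a b α
    · rw [if_pos hS, emb_last]
    · rw [if_neg hS, emb_last]
  have hk := t.isLt
  set k : Fin d := ⟨((t:ℕ)-1)/2, by omega⟩ with hkdef
  by_cases hpar : ((t:ℕ)-1) % 2 = 0
  · have ht : t = idxO k := by ext; simp [idxO, hkdef]; omega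
    rw [ht, mix_odd]
    rw [show ((if k ∈ kap α then j k else i k) : Fin n) = if α k = true then j k else i k from by
      simp [mem_kap]]
    by_cases hα : α k = true
    · rw [if_pos hα,
        if_neg (show idxO k ∉ ptI d a b α from by rw [mem_ptI_odd]; simp [hα]), emb_odd]
    · rw [if_neg hα,
        if_pos (show idxO k ∈ ptI d a b α from by rw [mem_ptI_odd]; simpa using hα), emb_odd]
  · have ht : t = idxE k := by ext; simp [idxE, hkdef]; omega
    rw [ht, mix_even]
    rw [show ((if k ∈ kap α then i k else j k) : Fin n) = if α k = true then i k else j k from by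
      simp [mem_kap]]
    by_cases hα : α k = true
    · rw [if_pos hα,
        if_pos (show idxE k ∈ ptI d a b α from by rw [mem_ptI_even]; exact hα), emb_even]
    · rw [if_neg hα,
        if_neg (show idxE k ∉ ptI d a b α from by rw [mem_ptI_even]; exact hα), emb_even]

lemma rank_ptrans_pslice_le (a b : Bool) (α : Fin d → Bool)
    (X : (Fin (2*d+2) → Fin n) → F) :
    (ptrans (kap α) (pslice X)).rank ≤ (flat (ptI d a b α) X).rank := by
  rw [ptrans_pslice_eq_submatrix a b]
  exact myrank_submatrix_le' _ _ _

def sigmap (α : Fin d → Bool) (x : Fin (2*d+2) → Fin n) : Fin d → Fin n :=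
  fun k => if α k = true then x (idxE k) else x (idxO k)

def taumap (α : Fin d → Bool) (y : Fin (2*d+2) → Fin n) : Fin d → Fin n :=
  fun k => if α k = true then y (idxO k) else y (idxE k)

noncomputable def eFac (a b : Bool) (x : Fin (2*d+2) → Fin n) : F :=
  if (a = true → x idx0 = 0) ∧ (b = false → x idxL = 0) then 1 else 0

noncomputable def fFac (a b : Bool) (y : Fin (2*d+2) → Fin n) : F :=
  if (a = false → y idx0 = 0) ∧ (b = true → y idxL = 0) then 1 else 0

lemma flat_padded_entry (a b : Bool) (α : Fin d → Bool)
    (N : Matrix (Fin d → Fin n) (Fin d → Fin n) F) (x y : Fin (2*d+2) → Fin n) :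
    flat (ptI d a b α) (padded N) x y
      = (eFac a b x) * (((ptrans (kap α) N) (sigmap α x) (taumap α y)) * (fFac a b y)) := by
  set S := ptI d a b α with hS
  set z : Fin (2*d+2) → Fin n := fun t => if t ∈ S then x t else y t with hz
  have hu : (fun k => z (idxO k))
      = fun k => if k ∈ kap α then taumap α y k else sigmap α x k := by
    funext k
    by_cases hα : α k = true
    · rw [hz]; show (if idxO k ∈ S then x _ else y _) = _
      rw [if_neg (show idxO k ∉ S from by rw [hS, mem_ptI_odd]; simp [hα]),
          if_pos ((mem_kap α k).mpr hα)]
      simp [taumap, hα]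
    · rw [hz]; show (if idxO k ∈ S then x _ else y _) = _
      rw [if_pos (show idxO k ∈ S from by rw [hS, mem_ptI_odd]; simpa using hα),
          if_neg (fun hm => hα ((mem_kap α k).mp hm))]
      simp [sigmap, hα]
  have hv : (fun k => z (idxE k))
      = fun k => if k ∈ kap α then sigmap α x k else taumap α y k := by
    funext k
    by_cases hα : α k = true
    · rw [hz]; show (if idxE k ∈ S then x _ else y _) = _
      rw [if_pos (show idxE k ∈ S from by rw [hS, mem_ptI_even]; exact hα),
          if_pos ((mem_kap α k).mpr hα)]
      simp [sigmap, hα]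
    · rw [hz]; show (if idxE k ∈ S then x _ else y _) = _
      rw [if_neg (show idxE k ∉ S from by rw [hS, mem_ptI_even]; exact hα),
          if_neg (fun hm => hα ((mem_kap α k).mp hm))]
      simp [taumap, hα]
  have hz0 : z idx0 = if a = true then x idx0 else y idx0 := by
    by_cases ha : a = true
    · rw [hz]; show (if idx0 ∈ S then x _ else y _) = _
      rw [if_pos (show idx0 ∈ S from by rw [hS, mem_ptI_zero]; exact ha), if_pos ha]
    · rw [hz]; show (if idx0 ∈ S then x _ else y _) = _
      rw [if_neg (show idx0 ∉ S from by rw [hS, mem_ptI_zero]; exact ha), if_neg ha]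
  have hzL : z idxL = if b = false then x idxL else y idxL := by
    by_cases hb : b = false
    · rw [hz]; show (if idxL ∈ S then x _ else y _) = _
      rw [if_pos (show idxL ∈ S from by rw [hS, mem_ptI_last]; exact hb), if_pos hb]
    · rw [hz]; show (if idxL ∈ S then x _ else y _) = _
      rw [if_neg (show idxL ∉ S from by rw [hS, mem_ptI_last]; exact hb), if_neg hb]
  show padded N z = _
  rw [padded]
  show (if z idx0 = 0 ∧ z idxL = 0 then N (fun k => z (idxO k)) (fun k => z (idxE k)) else 0) = _
  rw [hu, hv, hz0, hzL]
  show (if _ then ptrans (kap α) N (sigmap α x) (taumap α y) else 0) = _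
  rw [eFac, fFac]
  cases a <;> cases b <;>
    simp only [Bool.true_eq_false, Bool.false_eq_true, if_true, if_false,
      eq_self_iff_true, true_implies, false_implies, and_true, true_and, if_neg, if_pos] <;>
    by_cases h1 : x idx0 = 0 <;> by_cases h2 : y idx0 = 0 <;>
    by_cases h3 : x idxL = 0 <;> by_cases h4 : y idxL = 0 <;>
    simp [h1, h2, h3, h4]

lemma rank_flat_padded_le (a b : Bool) (α : Fin d → Bool)
    (N : Matrix (Fin d → Fin n) (Fin d → Fin n) F) :
    (flat (ptI d a b α) (padded N)).rank ≤ (ptrans (kap α) N).rank := by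
  classical
  have hfac : flat (ptI d a b α) (padded N)
      = Matrix.diagonal (eFac a b) *
        (((ptrans (kap α) N).submatrix (sigmap α) (taumap α)) * Matrix.diagonal (fFac a b)) := by
    ext x y
    rw [Matrix.diagonal_mul, Matrix.mul_diagonal]
    exact flat_padded_entry a b α N x y
  rw [hfac]
  exact (Matrix.rank_mul_le_right _ _).trans
    ((Matrix.rank_mul_le_left _ _).trans (myrank_submatrix_le' _ _ _))

end Padded

/-- `PT-rank(M) = n^{d+1} · ρ(PaddedTensor(M))`. -/
theorem stmt15 {F : Type*} [Field F] (n d : ℕ) [NeZero n]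
    (M : Matrix (Fin d → Fin n) (Fin d → Fin n) F) :
    (PTrank M : ℝ) = (n : ℝ) ^ (d + 1) * rho n d (padded M) := by
  classical
  have hn : (0:ℝ) < (n:ℝ) ^ (d+1) := by
    have : 0 < n := Nat.pos_of_ne_zero (NeZero.ne n)
    positivity
  set c : ℝ := (PTrank M : ℝ) / (n:ℝ)^(d+1) with hc
  -- lower bound for all members of the inner set
  have hlow : ∀ (a b : Bool) (s : ℝ),
      s ∈ { r : ℝ | ∃ X : (Fin d → Bool) → ((Fin (2 * d + 2) → Fin n) → F),
        (∑ α, X α) = padded M ∧ r = ∑ α, relrk n d a b α (X α) } → c ≤ s := by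
    rintro a b s ⟨X, hX, rfl⟩
    have hM : ∑ α, pslice (X α) = M := by
      rw [← pslice_sum, hX, pslice_padded]
    have h1 : PTrank M ≤ ∑ α, (ptrans (kap α) (pslice (X α))).rank :=
      PTrank_le_sum M _ hM
    have h2 : ∑ α, (ptrans (kap α) (pslice (X α))).rank
        ≤ ∑ α, (flat (ptI d a b α) (X α)).rank :=
      Finset.sum_le_sum fun α _ => rank_ptrans_pslice_le a b α (X α)
    have h3 : (PTrank M : ℝ) ≤ ∑ α, ((flat (ptI d a b α) (X α)).rank : ℝ) := by
      have := le_trans h1 h2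
      exact_mod_cast this
    have h4 : ∑ α, relrk n d a b α (X α)
        = (∑ α, ((flat (ptI d a b α) (X α)).rank : ℝ)) / (n:ℝ)^(d+1) := by
      rw [Finset.sum_div]
      rfl
    rw [h4, hc]
    exact div_le_div_of_nonneg_right h3 hn.le
  -- an explicit decomposition attaining the bound
  obtain ⟨P, hP, hPsum⟩ := Nat.sInf_mem (PTrank_set_nonempty M)
  have hex : ∀ (a b : Bool), ∃ s ∈ { r : ℝ | ∃ X : (Fin d → Bool) → ((Fin (2 * d + 2) → Fin n) → F),
      (∑ α, X α) = padded M ∧ r = ∑ α, relrk n d a b α (X α) }, s ≤ c := by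
    intro a b
    choose κi hκi using hP
    set αof : Fin (PTrank M) → (Fin d → Bool) := fun i k => decide (k ∈ κi i) with hαof
    set G : (Fin d → Bool) → Matrix (Fin d → Fin n) (Fin d → Fin n) F :=
      fun α => ∑ i ∈ Finset.univ.filter (fun i => αof i = α), P i with hG
    have hGsum : ∑ α, G α = M := by
      have h := Finset.sum_fiberwise_of_maps_to
        (fun (i : Fin (PTrank M)) (_ : i ∈ Finset.univ) => Finset.mem_univ (αof i)) P
      calc ∑ α, G α = ∑ i, P i := h
        _ = M := hPsum.symm
    refine ⟨∑ α, relrk n d a b α (padded (G α)), ⟨fun α => padded (G α), ?_, rfl⟩, ?_⟩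
    · rw [← padded_sum, hGsum]
    · have hb1 : ∀ α, (flat (ptI d a b α) (padded (G α))).rank
          ≤ (Finset.univ.filter (fun i => αof i = α)).card := by
        intro α
        refine (rank_flat_padded_le a b α (G α)).trans ?_
        rw [hG]; simp only []
        refine (congrArg Matrix.rank (ptrans_sum (kap α) _ P)).trans_le ?_
        refine (myrank_sum_le _ _).trans ?_
        rw [Finset.card_eq_sum_ones]
        refine Finset.sum_le_sum fun i hi => ?_
        have hfib : αof i = α := (Finset.mem_filter.mp hi).2
        have : kap α = κi i := by rw [← hfib, hαof]; exact kap_decide (κi i)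
        rw [this, hκi i]
      have hb2 : ∑ α, ((Finset.univ.filter (fun i => αof i = α)).card : ℝ)
          = (PTrank M : ℝ) := by
        have h5 : ∑ α, (Finset.univ.filter (fun i => αof i = α)).card = PTrank M := by
          have h6 := Finset.sum_fiberwise_of_maps_to
            (fun (i : Fin (PTrank M)) (_ : i ∈ Finset.univ) => Finset.mem_univ (αof i))
            (fun _ => (1:ℕ))
          calc ∑ α, (Finset.univ.filter (fun i => αof i = α)).card
              = ∑ α, ∑ _i ∈ Finset.univ.filter (fun i => αof i = α), 1 :=
                Finset.sum_congr rfl fun α _ => Finset.card_eq_sum_ones _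
            _ = ∑ _i : Fin (PTrank M), 1 := h6
            _ = PTrank M := by simp
        exact_mod_cast congrArg (Nat.cast : ℕ → ℝ) h5
      have : ∑ α, relrk n d a b α (padded (G α))
          ≤ ∑ α, ((Finset.univ.filter (fun i => αof i = α)).card : ℝ) / (n:ℝ)^(d+1) := by
        refine Finset.sum_le_sum fun α _ => ?_
        unfold relrk
        exact div_le_div_of_nonneg_right (by exact_mod_cast hb1 α) hn.le
      rw [← Finset.sum_div, hb2] at this
      exact this
  -- the inner infimum is exactly c, for every a b
  have key : ∀ a b : Bool,
      sInf { r : ℝ | ∃ X : (Fin d → Bool) → ((Fin (2 * d + 2) → Fin n) → F),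
        (∑ α, X α) = padded M ∧ r = ∑ α, relrk n d a b α (X α) } = c := by
    intro a b
    obtain ⟨s, hsmem, hsle⟩ := hex a b
    refine le_antisymm ?_ ?_
    · exact (csInf_le ⟨c, fun t ht => hlow a b t ht⟩ hsmem).trans hsle
    · exact le_csInf ⟨s, hsmem⟩ (fun t ht => hlow a b t ht)
  have hrho : rho n d (padded M) = c := by
    unfold rho
    simp only [key]
    rw [ciSup_const, ciSup_const]
  rw [hrho, hc, mul_comm, div_mul_cancel₀ _ (ne_of_gt hn)]
end
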